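/- Let X_J ⊂ X be measurable with μ(X_J) > 0, set μ_J := μ restricted to X_J, let ν_J ∈ M₊(Y) satisfy ν_J ≤ ν and ‖ν_J‖ = ‖μ_J‖, and let u ∈ L^∞₊(X,μ), v ∈ L^∞₊(Y,ν) be such that (u⊗v)·K ∈ Π(μ_J, ν_J). Then u(x₁)/u(x₂) ≤ exp(‖c‖_∞/ε) for μ_J-a.e. x₁, x₂ ∈ X_J. -/

import Mathlib

open MeasureTheory ENNReal Filter Topology

noncomputable section

/-- `phi s = s * log s - s + 1` (note `phi 0 = 1` since `Real.log 0 = 0`);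
this is the integrand of the Kullback--Leibler divergence. -/
def phi (s : ℝ) : ℝ := s * Real.log s - s + 1

open Classical in
/-- Kullback--Leibler divergence `KL(ρ|σ) ∈ [0,∞]`: `∫ phi (dρ/dσ) dσ` if `ρ ≪ σ`,
and `∞` otherwise (nonnegativity of `ρ` is automatic for measures). -/
def KL {Z : Type*} [MeasurableSpace Z] (ρ σ : Measure Z) : ℝ≥0∞ :=
  if ρ ≪ σ then ∫⁻ z, ENNReal.ofReal (phi ((ρ.rnDeriv σ) z).toReal) ∂σ else ⊤

/-- The set `Π(μh, νh)` of transport plans with marginals `μh` and `νh`. -/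
def Coupling {X Y : Type*} [MeasurableSpace X] [MeasurableSpace Y]
    (μh : Measure X) (νh : Measure Y) : Set (Measure (X × Y)) :=
  {π | π.map Prod.fst = μh ∧ π.map Prod.snd = νh}

/-- The Gibbs kernel measure `K = exp(-c/ε) ⋅ (μ ⊗ ν)`. -/
def Kmeas {X Y : Type*} [MeasurableSpace X] [MeasurableSpace Y]
    (μ : Measure X) (ν : Measure Y) [SFinite ν] (c : X × Y → ℝ) (ε : ℝ) : Measure (X × Y) :=
  (μ.prod ν).withDensity fun p => ENNReal.ofReal (Real.exp (-c p / ε))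

/-- The product density `(u ⊗ v)(x,y) = u x * v y`, as an `ℝ≥0∞`-valued density. -/
def prodDensity {X Y : Type*} (u : X → ℝ) (v : Y → ℝ) : X × Y → ℝ≥0∞ :=
  fun p => ENNReal.ofReal (u p.1 * v p.2)

/-- `L^∞₊(μ)`: measurable, a.e. nonnegative, essentially bounded functions. -/
def LinftyPlus {Z : Type*} [MeasurableSpace Z] (μ : Measure Z) (u : Z → ℝ) : Prop :=
  Measurable u ∧ (∀ᵐ z ∂μ, 0 ≤ u z) ∧ ∃ C : ℝ, ∀ᵐ z ∂μ, u z ≤ C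

/-- Lemma 2.9 (ii): ratio bound for the `u`-scaling factor of a
cell plan: `u x₁ / u x₂ ≤ exp(‖c‖_∞/ε)` for `μ_J`-a.e. `x₁, x₂`. -/
theorem scaling_ratio_bound
    {X Y : Type*} [MetricSpace X] [CompactSpace X] [MeasurableSpace X] [BorelSpace X]
    [MetricSpace Y] [CompactSpace Y] [MeasurableSpace Y] [BorelSpace Y]
    (μ : Measure X) (ν : Measure Y) [IsProbabilityMeasure μ] [IsProbabilityMeasure ν]
    (c : X × Y → ℝ) (hc : Measurable c) (cmax : ℝ)
    (hc0 : ∀ p, 0 ≤ c p) (hcmax : ∀ p, c p ≤ cmax)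
    (ε : ℝ) (hε : 0 < ε)
    (XJ : Set X) (hXJ : MeasurableSet XJ) (hXJpos : 0 < μ XJ)
    (νJ : Measure Y) (hνJle : νJ ≤ ν) (hνJmass : νJ Set.univ = μ XJ)
    (u : X → ℝ) (v : Y → ℝ) (hu : LinftyPlus μ u) (hv : LinftyPlus ν v)
    (hplan : (Kmeas μ ν c ε).withDensity (prodDensity u v) ∈
      Coupling (μ.restrict XJ) νJ) :
    ∀ᵐ x₁ ∂μ.restrict XJ, ∀ᵐ x₂ ∂μ.restrict XJ,
      u x₁ ≤ Real.exp (cmax / ε) * u x₂ := by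
  obtain ⟨humeas, hupos, _⟩ := hu
  obtain ⟨hvmeas, hvpos, Cv, hvC⟩ := hv
  set g : X × Y → ℝ≥0∞ := fun p =>
    ENNReal.ofReal (Real.exp (-c p / ε)) * ENNReal.ofReal (u p.1 * v p.2) with hgdef
  have hgmeas : Measurable g :=
    (((hc.neg.div_const ε).exp).ennreal_ofReal).mul
      (((humeas.comp measurable_fst).mul (hvmeas.comp measurable_snd)).ennreal_ofReal)
  have hpdmeas : Measurable (prodDensity u v) :=
    ((humeas.comp measurable_fst).mul (hvmeas.comp measurable_snd)).ennreal_ofReal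
  have hπ : (Kmeas μ ν c ε).withDensity (prodDensity u v) = (μ.prod ν).withDensity g := by
    rw [Kmeas]
    exact (withDensity_mul (μ.prod ν) ((hc.neg.div_const ε).exp.ennreal_ofReal) hpdmeas).symm
  set F : X → ℝ≥0∞ := fun x => ∫⁻ y, g (x, y) ∂ν with hFdef
  have hFmeas : Measurable F := hgmeas.lintegral_prod_right'
  have hmap : ((μ.prod ν).withDensity g).map Prod.fst = μ.withDensity F := by
    ext s hs
    rw [Measure.map_apply measurable_fst hs, withDensity_apply _ (hs.preimage measurable_fst),
      withDensity_apply _ hs]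
    have : (Prod.fst ⁻¹' s : Set (X × Y)) = s ×ˢ Set.univ := by
      ext p; simp
    rw [this, ← Measure.restrict_univ (μ := ν), ← Measure.prod_restrict,
      MeasureTheory.lintegral_prod _ hgmeas.aemeasurable]
    simp only [Measure.restrict_univ]
    rfl
  have hFeq : μ.withDensity F = μ.restrict XJ := by
    rw [← hmap, ← hπ, hplan.1]
  -- F = indicator a.e.
  have hFind : F =ᵐ[μ] XJ.indicator 1 := by
    have hfin : ∫⁻ x, F x ∂μ ≠ ⊤ := by
      have : ∫⁻ x, F x ∂μ = (μ.withDensity F) Set.univ := by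
        rw [withDensity_apply _ MeasurableSet.univ, Measure.restrict_univ]
      rw [this, hFeq]
      exact (measure_lt_top _ _).ne
    refine (withDensity_eq_iff_of_sigmaFinite (μ := μ) hFmeas.aemeasurable
      ((measurable_one.indicator hXJ).aemeasurable)).mp ?_
    rw [hFeq, withDensity_indicator hXJ, withDensity_one]
  set I : ℝ≥0∞ := ∫⁻ y, ENNReal.ofReal (v y) ∂ν with hIdef
  have hIfin : I ≠ ⊤ := by
    have hb : I ≤ ENNReal.ofReal (max Cv 0) := by
      calc I ≤ ∫⁻ _, ENNReal.ofReal (max Cv 0) ∂ν := by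
              refine lintegral_mono_ae ?_
              filter_upwards [hvC] with y hy
              exact ENNReal.ofReal_le_ofReal (le_max_of_le_left hy)
        _ = ENNReal.ofReal (max Cv 0) := by simp
    exact (lt_of_le_of_lt hb ENNReal.ofReal_lt_top).ne
  -- upper and lower bounds on F
  have hub : ∀ x, 0 ≤ u x → F x ≤ ENNReal.ofReal (u x) * I := by
    intro x hx
    calc F x ≤ ∫⁻ y, ENNReal.ofReal (u x) * ENNReal.ofReal (v y) ∂ν := by
          refine lintegral_mono fun y => ?_
          have h1 : ENNReal.ofReal (Real.exp (-c (x, y) / ε)) ≤ 1 := by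
            rw [← ENNReal.ofReal_one]
            refine ENNReal.ofReal_le_ofReal (Real.exp_le_one_iff.mpr ?_)
            exact div_nonpos_of_nonpos_of_nonneg (neg_nonpos.mpr (hc0 _)) hε.le
          calc g (x, y) = ENNReal.ofReal (Real.exp (-c (x, y) / ε)) *
                (ENNReal.ofReal (u x) * ENNReal.ofReal (v y)) := by
                rw [show g (x, y) = ENNReal.ofReal (Real.exp (-c (x, y) / ε)) *
                  ENNReal.ofReal (u x * v y) from rfl, ENNReal.ofReal_mul hx]
            _ ≤ 1 * (ENNReal.ofReal (u x) * ENNReal.ofReal (v y)) :=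
                mul_le_mul_left h1 _
            _ = _ := one_mul _
      _ = ENNReal.ofReal (u x) * I := lintegral_const_mul _ hvmeas.ennreal_ofReal
  have hlb : ∀ x, 0 ≤ u x →
      ENNReal.ofReal (Real.exp (-cmax / ε)) * (ENNReal.ofReal (u x) * I) ≤ F x := by
    intro x hx
    have : ∫⁻ y, ENNReal.ofReal (Real.exp (-cmax / ε)) *
        (ENNReal.ofReal (u x) * ENNReal.ofReal (v y)) ∂ν ≤ F x := by
      refine lintegral_mono fun y => ?_
      have h1 : ENNReal.ofReal (Real.exp (-cmax / ε)) ≤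
          ENNReal.ofReal (Real.exp (-c (x, y) / ε)) := by
        refine ENNReal.ofReal_le_ofReal (Real.exp_le_exp.mpr ?_)
        have h2 : -cmax ≤ -c (x, y) := neg_le_neg (hcmax _)
        exact div_le_div_of_nonneg_right h2 hε.le
      calc ENNReal.ofReal (Real.exp (-cmax / ε)) *
            (ENNReal.ofReal (u x) * ENNReal.ofReal (v y))
          ≤ ENNReal.ofReal (Real.exp (-c (x, y) / ε)) *
            (ENNReal.ofReal (u x) * ENNReal.ofReal (v y)) := mul_le_mul_left h1 _
        _ = g (x, y) := by
              rw [show g (x, y) = ENNReal.ofReal (Real.exp (-c (x, y) / ε)) *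
                ENNReal.ofReal (u x * v y) from rfl, ENNReal.ofReal_mul hx]
    calc ENNReal.ofReal (Real.exp (-cmax / ε)) * (ENNReal.ofReal (u x) * I)
        = ∫⁻ y, ENNReal.ofReal (Real.exp (-cmax / ε)) *
            (ENNReal.ofReal (u x) * ENNReal.ofReal (v y)) ∂ν := by
          rw [← lintegral_const_mul _ hvmeas.ennreal_ofReal,
            ← lintegral_const_mul (f := fun y => ENNReal.ofReal (u x) * ENNReal.ofReal (v y)) _
              (measurable_const.mul hvmeas.ennreal_ofReal)]
      _ ≤ F x := this
  -- F = 1 a.e. on XJ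
  have hF1 : ∀ᵐ x ∂μ.restrict XJ, F x = 1 := by
    filter_upwards [ae_restrict_of_ae hFind, ae_restrict_mem hXJ] with x h hmem
    rw [h, Set.indicator_of_mem hmem]; rfl
  have hur : ∀ᵐ x ∂μ.restrict XJ, 0 ≤ u x := ae_restrict_of_ae hupos
  -- I ≠ 0
  have hI0 : I ≠ 0 := by
    have hne : (μ.restrict XJ) ≠ 0 := by
      intro h0
      have h2 : μ.restrict XJ Set.univ = 0 := by rw [h0]; rfl
      rw [Measure.restrict_apply_univ] at h2
      exact absurd h2 hXJpos.ne'
    have : (ae (μ.restrict XJ)).NeBot := ae_neBot.mpr hne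
    obtain ⟨x₀, h1, h2⟩ := (hF1.and hur).exists
    intro hI
    have h3 := hub x₀ h2
    rw [h1, hI, mul_zero] at h3
    simp at h3
  -- conclude
  filter_upwards [hF1, hur] with x₁ h1 hu1
  filter_upwards [hF1, hur] with x₂ h2 hu2
  have hA : ENNReal.ofReal (Real.exp (-cmax / ε)) * ENNReal.ofReal (u x₁) * I ≤
      ENNReal.ofReal (u x₂) * I := by
    calc ENNReal.ofReal (Real.exp (-cmax / ε)) * ENNReal.ofReal (u x₁) * I
        = ENNReal.ofReal (Real.exp (-cmax / ε)) * (ENNReal.ofReal (u x₁) * I) := by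
          rw [mul_assoc]
      _ ≤ F x₁ := hlb x₁ hu1
      _ = 1 := h1
      _ = F x₂ := h2.symm
      _ ≤ ENNReal.ofReal (u x₂) * I := hub x₂ hu2
  have hB : ENNReal.ofReal (Real.exp (-cmax / ε)) * ENNReal.ofReal (u x₁) ≤
      ENNReal.ofReal (u x₂) := by
    exact (ENNReal.mul_le_mul_iff_left hI0 hIfin).mp hA
  rw [← ENNReal.ofReal_mul (Real.exp_nonneg _)] at hB
  have hreal : Real.exp (-cmax / ε) * u x₁ ≤ u x₂ :=
    (ENNReal.ofReal_le_ofReal_iff hu2).mp hB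
  have := mul_le_mul_of_nonneg_left hreal (Real.exp_nonneg (cmax / ε))
  calc u x₁ = Real.exp (cmax / ε) * (Real.exp (-cmax / ε) * u x₁) := by
        rw [← mul_assoc, ← Real.exp_add]
        simp [neg_div]
    _ ≤ Real.exp (cmax / ε) * u x₂ := this
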